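/- Let s, n be positive integers, V = 𝔽₂^{s×n}, and let P ⊆ V be an 𝔽₂-linear subspace. Then the base-4 WAFOM variant W(P) := Σ_{A ∈ P^⊥ \ {0}} 4^{−μ'(A)} satisfies W(P) = (1/|P|) · Σ_{x = (x_{i,j}) ∈ P} [ Π_{1≤i≤s} Π_{1≤j≤n} (1 + (−1)^{x_{i,j}} · 4^{−(j+1)}) − 1 ]. -/

import Mathlib

noncomputable def wsgn (t : ZMod 2) : ℝ := (-1 : ℝ) ^ t.val
lemma wsgn_zero : wsgn 0 = 1 := rfl
lemma wsgn_add (a b : ZMod 2) : wsgn (a + b) = wsgn a * wsgn b := by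
  have h0 : (0 : ZMod 2).val = 0 := rfl
  have h1 : (1 : ZMod 2).val = 1 := rfl
  have h2 : (1 + 1 : ZMod 2).val = 0 := rfl
  obtain rfl | rfl : a = 0 ∨ a = 1 := (by revert a; decide) <;> obtain rfl | rfl : b = 0 ∨ b = 1 := (by revert b; decide) <;> simp [wsgn, h0, h1, h2]
lemma wsgn_sum {ι : Type*} (s : Finset ι) (f : ι → ZMod 2) :
    wsgn (∑ i ∈ s, f i) = ∏ i ∈ s, wsgn (f i) := by
  induction s using Finset.cons_induction with
  | empty => simp [wsgn_zero]
  | cons a s h ih => simp [Finset.sum_cons, Finset.prod_cons, wsgn_add, ih]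

lemma wexpand (s n : ℕ) (x : Matrix (Fin s) (Fin n) (ZMod 2)) :
    ∏ i : Fin s, ∏ j : Fin n, (1 + (-1:ℝ)^((x i j).val) * (4:ℝ)⁻¹ ^ ((j:ℕ)+1+1)) =
    ∑ A : Matrix (Fin s) (Fin n) (ZMod 2),
      wsgn (∑ i : Fin s, ∑ j : Fin n, x i j * A i j) *
        (4:ℝ)⁻¹ ^ (∑ i : Fin s, ∑ j : Fin n, ((j:ℕ)+1+1) * (A i j).val) := by
  classical
  have key : ∀ p : Fin s × Fin n,
      (1 + (-1:ℝ)^((x p.1 p.2).val) * (4:ℝ)⁻¹ ^ ((p.2:ℕ)+1+1)) =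
      ∑ a : ZMod 2, wsgn (x p.1 p.2 * a) * (4:ℝ)⁻¹ ^ (((p.2:ℕ)+1+1) * a.val) := by
    intro p
    have hsum : ∀ f : ZMod 2 → ℝ, ∑ a : ZMod 2, f a = f 0 + f 1 := fun f => Fin.sum_univ_two f
    rw [hsum]
    have h0 : (0 : ZMod 2).val = 0 := rfl
    have h1 : (1 : ZMod 2).val = 1 := rfl
    simp [wsgn, h0, h1]
  calc ∏ i : Fin s, ∏ j : Fin n, (1 + (-1:ℝ)^((x i j).val) * (4:ℝ)⁻¹ ^ ((j:ℕ)+1+1))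
      = ∏ p : Fin s × Fin n, (1 + (-1:ℝ)^((x p.1 p.2).val) * (4:ℝ)⁻¹ ^ ((p.2:ℕ)+1+1)) := by
        rw [Fintype.prod_prod_type]
    _ = ∏ p : Fin s × Fin n, ∑ a : ZMod 2, wsgn (x p.1 p.2 * a) * (4:ℝ)⁻¹ ^ (((p.2:ℕ)+1+1) * a.val) := by
        exact Finset.prod_congr rfl (fun p _ => key p)
    _ = ∑ g ∈ Fintype.piFinset (fun _ : Fin s × Fin n => (Finset.univ : Finset (ZMod 2))),
          ∏ p : Fin s × Fin n, wsgn (x p.1 p.2 * g p) * (4:ℝ)⁻¹ ^ (((p.2:ℕ)+1+1) * (g p).val) := by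
        rw [Finset.prod_univ_sum]
    _ = ∑ g : (Fin s × Fin n) → ZMod 2,
          ∏ p : Fin s × Fin n, wsgn (x p.1 p.2 * g p) * (4:ℝ)⁻¹ ^ (((p.2:ℕ)+1+1) * (g p).val) := by
        rw [Fintype.piFinset_univ]
    _ = ∑ A : Matrix (Fin s) (Fin n) (ZMod 2),
          ∏ p : Fin s × Fin n, wsgn (x p.1 p.2 * A p.1 p.2) * (4:ℝ)⁻¹ ^ (((p.2:ℕ)+1+1) * (A p.1 p.2).val) := by
        apply Fintype.sum_equiv (Equiv.curry (Fin s) (Fin n) (ZMod 2))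
        intro g
        rfl
    _ = ∑ A : Matrix (Fin s) (Fin n) (ZMod 2),
          wsgn (∑ i : Fin s, ∑ j : Fin n, x i j * A i j) *
            (4:ℝ)⁻¹ ^ (∑ i : Fin s, ∑ j : Fin n, ((j:ℕ)+1+1) * (A i j).val) := by
        apply Finset.sum_congr rfl
        intro A _
        rw [Finset.prod_mul_distrib, ← wsgn_sum, Finset.prod_pow_eq_pow_sum]
        have e1 : (∑ p : Fin s × Fin n, x p.1 p.2 * A p.1 p.2)
            = ∑ i : Fin s, ∑ j : Fin n, x i j * A i j :=
          Fintype.sum_prod_type _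
        have e2 : (∑ p : Fin s × Fin n, ((p.2:ℕ)+1+1) * (A p.1 p.2).val)
            = ∑ i : Fin s, ∑ j : Fin n, ((j:ℕ)+1+1) * (A i j).val :=
          Fintype.sum_prod_type _
        rw [e1, e2]

lemma zmod2_ne_zero (t : ZMod 2) (h : t ≠ 0) : t = 1 := by revert t; decide

open scoped Classical in
lemma wchar (s n : ℕ) (P : Submodule (ZMod 2) (Matrix (Fin s) (Fin n) (ZMod 2)))
    (A : Matrix (Fin s) (Fin n) (ZMod 2)) :
    ∑ x : P, wsgn (∑ i : Fin s, ∑ j : Fin n,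
        (x : Matrix (Fin s) (Fin n) (ZMod 2)) i j * A i j) =
      if (∀ B ∈ P, ∑ i : Fin s, ∑ j : Fin n, B i j * A i j = (0 : ZMod 2))
      then (Nat.card P : ℝ) else 0 := by
  classical
  set ip : Matrix (Fin s) (Fin n) (ZMod 2) → ZMod 2 :=
    fun B => ∑ i : Fin s, ∑ j : Fin n, B i j * A i j with hip
  have ip_add : ∀ B C, ip (B + C) = ip B + ip C := by
    intro B C
    simp [hip, add_mul, Finset.sum_add_distrib]
  split_ifs with h
  · have : ∀ x : P, wsgn (ip (x : Matrix (Fin s) (Fin n) (ZMod 2))) = 1 := by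
      intro x
      simp only [hip]
      rw [h x x.2]
      exact wsgn_zero
    rw [Finset.sum_congr rfl (fun x _ => this x), Finset.sum_const, Finset.card_univ,
      Nat.card_eq_fintype_card]
    simp
  · push_neg at h
    obtain ⟨B, hBP, hB⟩ := h
    have hB1 : ip B = 1 := zmod2_ne_zero _ hB
    set x₀ : P := ⟨B, hBP⟩ with hx₀
    set f : P → ℝ := fun x => wsgn (ip (x : Matrix (Fin s) (Fin n) (ZMod 2))) with hf
    have key : ∀ x : P, f (x + x₀) = -f x := by
      intro x
      have h2 : ip ((x : Matrix (Fin s) (Fin n) (ZMod 2)) + B) = ip x + 1 := by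
        rw [ip_add, hB1]
      simp only [hf]
      have hc : ((x + x₀ : P) : Matrix (Fin s) (Fin n) (ZMod 2))
          = (x : Matrix (Fin s) (Fin n) (ZMod 2)) + B := rfl
      rw [hc, h2, wsgn_add]
      have : wsgn 1 = -1 := by
        have h1 : (1 : ZMod 2).val = 1 := rfl
        simp [wsgn, h1]
      rw [this]
      ring
    have hswap : ∑ x : P, f x = ∑ x : P, f (x + x₀) :=
      (Fintype.sum_equiv (Equiv.addRight x₀) _ _ (fun x => rfl)).symm
    have hself : ∑ x : P, f x = - ∑ x : P, f x := by
      calc ∑ x : P, f x = ∑ x : P, f (x + x₀) := hswap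
        _ = ∑ x : P, -f x := Finset.sum_congr rfl (fun x _ => key x)
        _ = - ∑ x : P, f x := by rw [Finset.sum_neg_distrib]
    linarith

open scoped Classical in
/-- Base-4 WAFOM variant computational formula: for an `𝔽₂`-linear subspace `P ⊆ V = 𝔽₂^{s×n}`,
`Σ_{A ∈ P^⊥ \ {0}} 4^{−μ'(A)} = (1/|P|) Σ_{x ∈ P} [Π_{i,j} (1 + (−1)^{x_{i,j}} 4^{−(j+1)}) − 1]`,
where `μ'(A) = Σ_{i,j} (j+1)·a_{i,j}` and the paper's index `j` runs through `1, …, n`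
(so a column index `j : Fin n` corresponds to the paper's `j.val + 1`). -/
theorem wafom4_formula (s n : ℕ) (hs : 0 < s) (hn : 0 < n)
    (P : Submodule (ZMod 2) (Matrix (Fin s) (Fin n) (ZMod 2))) :
    ∑ A ∈ Finset.univ.filter
        (fun A : Matrix (Fin s) (Fin n) (ZMod 2) =>
          (∀ B ∈ P, ∑ i : Fin s, ∑ j : Fin n, B i j * A i j = (0 : ZMod 2)) ∧ A ≠ 0),
        (4 : ℝ) ^ (-(∑ i : Fin s, ∑ j : Fin n, ((j : ℕ) + 1 + 1) * (A i j).val : ℕ) : ℤ) =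
      (1 / (Nat.card P : ℝ)) *
        ∑ x : P,
          ((∏ i : Fin s, ∏ j : Fin n,
            (1 + (-1 : ℝ) ^ ((x : Matrix (Fin s) (Fin n) (ZMod 2)) i j).val *
              (4 : ℝ) ^ (-(((j : ℕ) + 1) + 1 : ℤ)))) - 1) := by
  classical
  have hcardP : (Nat.card P : ℝ) ≠ 0 := by
    have : 0 < Nat.card P := Nat.card_pos
    positivity
  set μ : Matrix (Fin s) (Fin n) (ZMod 2) → ℕ :=
    fun A => ∑ i : Fin s, ∑ j : Fin n, ((j:ℕ)+1+1) * (A i j).val with hμ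
  set orth : Matrix (Fin s) (Fin n) (ZMod 2) → Prop :=
    fun A => ∀ B ∈ P, ∑ i : Fin s, ∑ j : Fin n, B i j * A i j = (0 : ZMod 2) with horth
  have hpow : ∀ j : Fin n, (4:ℝ) ^ (-(((j:ℕ)+1)+1 : ℤ)) = (4:ℝ)⁻¹ ^ ((j:ℕ)+1+1) := by
    intro j
    rw [show (-(((j:ℕ)+1)+1 : ℤ)) = -((((j:ℕ)+1+1 : ℕ)) : ℤ) by push_cast; ring,
      zpow_neg, zpow_natCast, ← inv_pow]
  have hpow2 : ∀ m : ℕ, (4:ℝ) ^ (-(m:ℕ) : ℤ) = (4:ℝ)⁻¹ ^ m := by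
    intro m; rw [zpow_neg, zpow_natCast, ← inv_pow]
  symm
  calc (1 / (Nat.card P : ℝ)) *
        ∑ x : P, ((∏ i : Fin s, ∏ j : Fin n,
            (1 + (-1 : ℝ) ^ ((x : Matrix (Fin s) (Fin n) (ZMod 2)) i j).val *
              (4 : ℝ) ^ (-(((j : ℕ) + 1) + 1 : ℤ)))) - 1)
      = (1 / (Nat.card P : ℝ)) *
        ∑ x : P, ((∑ A : Matrix (Fin s) (Fin n) (ZMod 2),
            wsgn (∑ i : Fin s, ∑ j : Fin n, (x : Matrix (Fin s) (Fin n) (ZMod 2)) i j * A i j) *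
              (4:ℝ)⁻¹ ^ (μ A)) - 1) := by
        congr 1
        apply Finset.sum_congr rfl
        intro x _
        congr 1
        rw [← wexpand]
        exact Finset.prod_congr rfl (fun i _ => Finset.prod_congr rfl
          (fun j _ => by rw [hpow j]))
    _ = (1 / (Nat.card P : ℝ)) *
        ∑ x : P, ∑ A ∈ (Finset.univ.erase (0 : Matrix (Fin s) (Fin n) (ZMod 2))),
            wsgn (∑ i : Fin s, ∑ j : Fin n, (x : Matrix (Fin s) (Fin n) (ZMod 2)) i j * A i j) *
              (4:ℝ)⁻¹ ^ (μ A) := by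
        congr 1
        apply Finset.sum_congr rfl
        intro x _
        have h0 : wsgn (∑ i : Fin s, ∑ j : Fin n,
              (x : Matrix (Fin s) (Fin n) (ZMod 2)) i j * (0 : Matrix (Fin s) (Fin n) (ZMod 2)) i j) *
              (4:ℝ)⁻¹ ^ (μ (0 : Matrix (Fin s) (Fin n) (ZMod 2))) = 1 := by
          simp [hμ, wsgn_zero]
        rw [← Finset.sum_erase_add Finset.univ _ (Finset.mem_univ (0 : Matrix (Fin s) (Fin n) (ZMod 2))), h0]
        ring
    _ = (1 / (Nat.card P : ℝ)) *
        ∑ A ∈ (Finset.univ.erase (0 : Matrix (Fin s) (Fin n) (ZMod 2))),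
          (if orth A then (Nat.card P : ℝ) else 0) * (4:ℝ)⁻¹ ^ (μ A) := by
        rw [Finset.sum_comm]
        congr 1
        apply Finset.sum_congr rfl
        intro A _
        rw [← Finset.sum_mul, wchar s n P A]
    _ = ∑ A ∈ (Finset.univ.erase (0 : Matrix (Fin s) (Fin n) (ZMod 2))),
          (if orth A then (4:ℝ)⁻¹ ^ (μ A) else 0) := by
        rw [Finset.mul_sum]
        apply Finset.sum_congr rfl
        intro A _
        split_ifs <;> field_simp <;> simp
    _ = ∑ A ∈ (Finset.univ.erase (0 : Matrix (Fin s) (Fin n) (ZMod 2))).filter orth,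
          (4:ℝ)⁻¹ ^ (μ A) := by
        rw [Finset.sum_filter]
    _ = ∑ A ∈ Finset.univ.filter (fun A : Matrix (Fin s) (Fin n) (ZMod 2) => orth A ∧ A ≠ 0),
          (4:ℝ)⁻¹ ^ (μ A) := by
        apply Finset.sum_congr _ (fun _ _ => rfl)
        ext A
        simp [Finset.mem_filter, Finset.mem_erase, and_comm]
    _ = ∑ A ∈ Finset.univ.filter
        (fun A : Matrix (Fin s) (Fin n) (ZMod 2) =>
          (∀ B ∈ P, ∑ i : Fin s, ∑ j : Fin n, B i j * A i j = (0 : ZMod 2)) ∧ A ≠ 0),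
        (4 : ℝ) ^ (-(∑ i : Fin s, ∑ j : Fin n, ((j : ℕ) + 1 + 1) * (A i j).val : ℕ) : ℤ) := by
        apply Finset.sum_congr rfl
        intro A _
        rw [hpow2]
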